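/- Let Y be a Banach space and {X_n}, X closed subspaces of Y. If X_n → X in the operator opening topology, then limsup_{n→∞} n(X_n) ≤ n(X). -/

import Mathlib

open Filter Metric ENNReal

noncomputable def nradius {E : Type*} [SeminormedAddCommGroup E] [NormedSpace ℝ E]
    (T : E →L[ℝ] E) : ℝ :=
  sSup {r : ℝ | ∃ (x : E) (f : E →L[ℝ] ℝ), ‖x‖ = 1 ∧ ‖f‖ = 1 ∧ f x = 1 ∧ r = |f (T x)|}

noncomputable def nindex (E : Type*) [SeminormedAddCommGroup E] [NormedSpace ℝ E] : ℝ :=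
  sInf {r : ℝ | ∃ T : E →L[ℝ] E, ‖T‖ = 1 ∧ r = nradius T}

open Classical in
noncomputable def r0 {Y : Type*} [NormedAddCommGroup Y] [NormedSpace ℝ Y]
    (A B : Submodule ℝ Y) : ℝ :=
  if ∃ C : Y ≃L[ℝ] Y, ⇑C '' (A : Set Y) = (B : Set Y) then
    sInf {r : ℝ | ∃ C : Y ≃L[ℝ] Y, ⇑C '' (A : Set Y) = (B : Set Y) ∧
      r = ‖(C : Y →L[ℝ] Y) - ContinuousLinearMap.id ℝ Y‖}
  else 1

noncomputable def rop {Y : Type*} [NormedAddCommGroup Y] [NormedSpace ℝ Y]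
    (A B : Submodule ℝ Y) : ℝ :=
  max (r0 A B) (r0 B A)

lemma nradius_bddAbove {E : Type*} [SeminormedAddCommGroup E] [NormedSpace ℝ E]
    (T : E →L[ℝ] E) :
    BddAbove {r : ℝ | ∃ (x : E) (f : E →L[ℝ] ℝ), ‖x‖ = 1 ∧ ‖f‖ = 1 ∧ f x = 1 ∧ r = |f (T x)|} := by
  refine ⟨‖T‖, ?_⟩
  rintro r ⟨x, f, hx, hf, hfx, rfl⟩
  calc |f (T x)| = ‖f (T x)‖ := (Real.norm_eq_abs _).symm
    _ ≤ ‖f‖ * ‖T x‖ := f.le_opNorm _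
    _ ≤ 1 * (‖T‖ * ‖x‖) := by rw [hf]; exact mul_le_mul_of_nonneg_left (T.le_opNorm x) one_pos.le
    _ = ‖T‖ := by rw [hx]; ring

lemma nradius_nonneg {E : Type*} [SeminormedAddCommGroup E] [NormedSpace ℝ E]
    (T : E →L[ℝ] E) : 0 ≤ nradius T := by
  apply Real.sSup_nonneg
  rintro r ⟨x, f, hx, hf, hfx, rfl⟩
  exact abs_nonneg _

lemma abs_le_nradius {E : Type*} [SeminormedAddCommGroup E] [NormedSpace ℝ E]
    (T : E →L[ℝ] E) {x : E} {f : E →L[ℝ] ℝ} (hx : ‖x‖ = 1) (hf : ‖f‖ = 1) (hfx : f x = 1) :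
    |f (T x)| ≤ nradius T :=
  le_csSup (nradius_bddAbove T) ⟨x, f, hx, hf, hfx, rfl⟩

lemma nradius_neg {E : Type*} [SeminormedAddCommGroup E] [NormedSpace ℝ E]
    (T : E →L[ℝ] E) : nradius (-T) = nradius T := by
  unfold nradius
  congr 1
  ext r
  constructor
  · rintro ⟨x, f, hx, hf, hfx, rfl⟩
    exact ⟨x, f, hx, hf, hfx, by simp⟩
  · rintro ⟨x, f, hx, hf, hfx, rfl⟩
    exact ⟨x, f, hx, hf, hfx, by simp⟩

lemma nindex_nonneg (E : Type*) [SeminormedAddCommGroup E] [NormedSpace ℝ E] :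
    0 ≤ nindex E := by
  apply Real.sInf_nonneg
  rintro r ⟨T, hT, rfl⟩
  exact nradius_nonneg T

lemma norm_id_add_smul_le {E : Type*} [NormedAddCommGroup E] [NormedSpace ℝ E]
    {T : E →L[ℝ] E} (hT : ‖T‖ ≤ 1) {t : ℝ} (ht : 0 < t) :
    ‖ContinuousLinearMap.id ℝ E + t • T‖ ≤ 1 + t * nradius T + 2 * t ^ 2 := by
  by_contra hcon
  push_neg at hcon
  obtain ⟨x, hx1, hx2⟩ := (ContinuousLinearMap.id ℝ E + t • T).exists_lt_apply_of_lt_opNorm hcon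
  set v := nradius T with hv
  have hv0 : 0 ≤ v := nradius_nonneg T
  set y := x + t • T x with hy
  have hyx : (ContinuousLinearMap.id ℝ E + t • T) x = y := by
    simp [hy, ContinuousLinearMap.add_apply]
  rw [hyx] at hx2
  have hy1 : 1 < ‖y‖ := by nlinarith
  have hyne : y ≠ 0 := by
    intro h; rw [h, norm_zero] at hy1; linarith
  obtain ⟨f, hf1, hf2'⟩ := exists_dual_vector ℝ y (norm_ne_zero_iff.mpr hyne)
  have hf2 : f y = ‖y‖ := by simpa using hf2'
  set z := ‖y‖⁻¹ • y with hz
  have hynz : ‖y‖ ≠ 0 := by positivity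
  have hz1 : ‖z‖ = 1 := by
    rw [hz, norm_smul, norm_inv, norm_norm, inv_mul_cancel₀ hynz]
  have hfz : f z = 1 := by
    rw [hz, map_smul, smul_eq_mul, hf2, inv_mul_cancel₀ hynz]
  have hTz : |f (T z)| ≤ v := abs_le_nradius T hz1 hf1 hfz
  have hTx : ‖T x‖ ≤ 1 := by
    calc ‖T x‖ ≤ ‖T‖ * ‖x‖ := T.le_opNorm x
      _ ≤ 1 * 1 := by apply mul_le_mul hT hx1.le (norm_nonneg _) zero_le_one
      _ = 1 := one_mul 1
  have hyub : ‖y‖ ≤ 1 + t := by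
    calc ‖y‖ ≤ ‖x‖ + ‖t • T x‖ := norm_add_le _ _
      _ ≤ 1 + t * 1 := by
          rw [norm_smul, Real.norm_eq_abs, abs_of_pos ht]
          exact add_le_add hx1.le (mul_le_mul_of_nonneg_left hTx ht.le)
      _ = 1 + t := by ring
  have hzy : ‖z - y‖ = ‖y‖ - 1 := by
    have h1 : z - y = (‖y‖⁻¹ - 1) • y := by rw [sub_smul, one_smul, hz]
    rw [h1, norm_smul, Real.norm_eq_abs, abs_of_nonpos (by
      have : ‖y‖⁻¹ ≤ 1 := by
        rw [inv_le_one_iff₀]; right; linarith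
      linarith)]
    have : ‖y‖⁻¹ * ‖y‖ = 1 := inv_mul_cancel₀ hynz
    nlinarith
  have hzx : ‖z - x‖ ≤ 2 * t := by
    calc ‖z - x‖ ≤ ‖z - y‖ + ‖y - x‖ := norm_sub_le_norm_sub_add_norm_sub z y x
      _ ≤ (‖y‖ - 1) + t := by
          rw [hzy]
          have : y - x = t • T x := by rw [hy]; abel
          rw [this, norm_smul, Real.norm_eq_abs, abs_of_pos ht]
          have := mul_le_mul_of_nonneg_left hTx ht.le
          linarith
      _ ≤ 2 * t := by linarith
  have hdiff : |f (T z) - f (T x)| ≤ 2 * t := by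
    calc |f (T z) - f (T x)| = ‖f (T (z - x))‖ := by rw [← map_sub, ← map_sub, Real.norm_eq_abs]
      _ ≤ ‖f‖ * ‖T (z - x)‖ := f.le_opNorm _
      _ ≤ 1 * (‖T‖ * ‖z - x‖) := by
          rw [hf1]; exact mul_le_mul_of_nonneg_left (T.le_opNorm _) one_pos.le
      _ ≤ 1 * (1 * (2 * t)) := by
          apply mul_le_mul_of_nonneg_left _ one_pos.le
          exact mul_le_mul hT hzx (norm_nonneg _) zero_le_one
      _ = 2 * t := by ring
  have hfy : f y = f x + t * f (T x) := by rw [hy, map_add, map_smul, smul_eq_mul]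
  have hfx1 : f x < 1 := by
    calc f x ≤ |f x| := le_abs_self _
      _ ≤ ‖f‖ * ‖x‖ := by rw [← Real.norm_eq_abs]; exact f.le_opNorm x
      _ < 1 := by rw [hf1, one_mul]; exact hx1
  have hkey : t * v + 2 * t ^ 2 < t * f (T x) := by
    have : t * f (T x) = ‖y‖ - f x := by rw [← hf2, hfy]; ring
    nlinarith
  have h1 : v + 2 * t < f (T x) := by nlinarith
  have h2 : f (T z) ≤ v := (abs_le.mp hTz).2
  have h3 : f (T x) - f (T z) ≤ 2 * t := by
    have := abs_le.mp hdiff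
    linarith [this.1]
  linarith


section ArithFacts

lemma cfact {η i : ℝ} (hη0 : 0 < η) (hη3 : η ≤ 1/3) (hi0 : 0 < i)
    (hi : (1 - η) * i = 1) :
    1 ≤ (1 + η) * i ∧ (1 + η) * i ≤ 2 ∧ (1 + η) * i - 1 ≤ 3 * η := by
  have hi32 : i ≤ 3/2 := by nlinarith
  have hi1 : 1 ≤ i := by nlinarith
  refine ⟨by nlinarith, by nlinarith, by nlinarith⟩

lemma inv_bound {η i a b : ℝ} (hi : (1 - η) * i = 1) (hi0 : 0 < i)
    (h : a - η * a ≤ b) (ha : 0 ≤ a) : a ≤ i * b := by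
  nlinarith [mul_le_mul_of_nonneg_left h hi0.le]

lemma pos_of_one_le_mul {c x : ℝ} (h : 1 ≤ c * x) (hc : c ≤ 2) (hx : 0 ≤ x) : 0 < x := by
  nlinarith

lemma w_le_c {c x w : ℝ} (h1 : 1 ≤ c * x) (hxw : x * w = 1) (hw0 : 0 ≤ w) : w ≤ c := by
  nlinarith [mul_le_mul_of_nonneg_right h1 hw0]

lemma one_add_nonneg {s v : ℝ} (hs : 0 ≤ s) (hv : 0 ≤ v) : (0:ℝ) ≤ 1 + s * v + 2 * s^2 := by
  nlinarith [mul_nonneg hs hv, sq_nonneg s]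

lemma numer_nonneg {c s v : ℝ} (hc : 1 ≤ c) (hs : 0 ≤ s) (hv : 0 ≤ v) :
    (0:ℝ) ≤ c * (1 + s * v + 2 * s^2) - 1 := by
  nlinarith [mul_nonneg hs hv, sq_nonneg s]

lemma one_le_of_le_mul {a b : ℝ} (ha : 0 < a) (h : a ≤ a * b) : 1 ≤ b := by nlinarith

lemma final_arith {ε η c w v N t s : ℝ} (hε : 0 < ε) (hη0 : 0 < η)
    (hη96 : η ≤ ε/96) (hη1600 : η ≤ ε^2/1600)
    (hc1 : 1 ≤ c) (hc2 : c ≤ 2) (hcm1 : c - 1 ≤ 3 * η)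
    (hw0 : 0 < w) (hwc : w ≤ c)
    (hv0 : 0 ≤ v) (hvle2 : v ≤ 2) (hvε : v ≤ N + ε/4)
    (ht : t = ε/100) (hs : s = t * w) :
    c * (1 + s * v + 2 * s^2) - 1 ≤ (N + ε) * t := by
  have ht0 : 0 < t := by rw [ht]; positivity
  have q1 : c * (1 + s * v + 2 * s^2) - 1 =
      (c - 1) + (c * w) * (t * v) + 2 * (t * t) * (c * (w * w)) := by
    rw [hs]; ring
  have ecw : c * w - 1 ≤ 9 * η := by nlinarith
  have etv : 0 ≤ t * v := mul_nonneg ht0.le hv0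
  have etv2 : t * v ≤ 2 * t := by nlinarith
  have q2 : (c * w) * (t * v) ≤ t * v + 18 * η * t := by nlinarith
  have ecww : c * (w * w) ≤ 8 := by nlinarith
  have q3 : 2 * (t * t) * (c * (w * w)) ≤ 16 * (t * t) := by nlinarith
  have q4 : t * v ≤ t * (N + ε/4) := mul_le_mul_of_nonneg_left hvε ht0.le
  have q5 : 3 * η + 18 * η * t + 16 * (t * t) ≤ (3/4) * ε * t := by
    subst ht
    nlinarith [mul_le_mul_of_nonneg_right hη96 hε.le, hη1600]
  nlinarith [q1, q2, q3, q4, q5, hcm1, ht0]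

end ArithFacts

set_option maxHeartbeats 1600000 in
set_option synthInstance.maxHeartbeats 1000000 in
theorem operator_opening_nindex_limsup
    (Y : Type*) [NormedAddCommGroup Y] [NormedSpace ℝ Y] [CompleteSpace Y]
    (Xs : ℕ → Subspace ℝ Y) (hXs : ∀ n, IsClosed ((Xs n : Set Y)))
    (X : Subspace ℝ Y) (hX : IsClosed (X : Set Y))
    (hconv : Tendsto (fun n => rop (Xs n) X) atTop (nhds 0)) :
    atTop.limsup (fun n => nindex ↑(Xs n)) ≤ nindex ↑X := by
  have key : ∀ ε > (0:ℝ), ∀ᶠ n in atTop, nindex ↑(Xs n) ≤ nindex ↑X + ε := by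
    intro ε hε
    set η := min (ε^2/1600) (min (ε/96) (1/3)) with hηdef
    have hη0 : 0 < η := by
      apply lt_min (by positivity) (lt_min (by positivity) (by norm_num))
    have hη3 : η ≤ 1/3 := le_trans (min_le_right _ _) (min_le_right _ _)
    have hη96 : η ≤ ε/96 := le_trans (min_le_right _ _) (min_le_left _ _)
    have hη1600 : η ≤ ε^2/1600 := min_le_left _ _
    have hev : ∀ᶠ n in atTop, rop (Xs n) X < η := hconv.eventually (gt_mem_nhds hη0)
    filter_upwards [hev] with n hn
    have h0 : r0 (Xs n) X < η := lt_of_le_of_lt (le_max_left _ _) hn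
    have hex : ∃ C : Y ≃L[ℝ] Y, ⇑C '' ((Xs n : Set Y)) = (X : Set Y) := by
      by_contra hne
      rw [r0, if_neg hne] at h0
      linarith
    rw [r0, if_pos hex] at h0
    obtain ⟨C0, hC0⟩ := hex
    have hne : Set.Nonempty {r : ℝ | ∃ C : Y ≃L[ℝ] Y, ⇑C '' ((Xs n : Set Y)) = (X : Set Y) ∧
        r = ‖(C : Y →L[ℝ] Y) - ContinuousLinearMap.id ℝ Y‖} := ⟨_, C0, hC0, rfl⟩
    obtain ⟨r, hrmem, hrlt⟩ := exists_lt_of_csInf_lt hne h0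
    obtain ⟨C, hCim, rfl⟩ := hrmem
    -- pointwise bound for C - id
    have hCpt : ∀ u : Y, ‖C u - u‖ ≤ η * ‖u‖ := by
      intro u
      have h1 : ((C : Y →L[ℝ] Y) - ContinuousLinearMap.id ℝ Y) u = C u - u := by
        simp
      calc ‖C u - u‖ = ‖((C : Y →L[ℝ] Y) - ContinuousLinearMap.id ℝ Y) u‖ := by rw [h1]
        _ ≤ ‖(C : Y →L[ℝ] Y) - ContinuousLinearMap.id ℝ Y‖ * ‖u‖ := ContinuousLinearMap.le_opNorm _ _
        _ ≤ η * ‖u‖ := mul_le_mul_of_nonneg_right hrlt.le (norm_nonneg _)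
    have memJ : ∀ u : ↥(Xs n), C (u : Y) ∈ X := by
      intro u
      show C (u : Y) ∈ (X : Set Y)
      rw [← hCim]
      exact ⟨u, u.2, rfl⟩
    have memJ' : ∀ w : ↥X, C.symm (w : Y) ∈ Xs n := by
      intro w
      have hw : (w : Y) ∈ (X : Set Y) := w.2
      rw [← hCim] at hw
      obtain ⟨u, hu, huw⟩ := hw
      rw [← huw, ContinuousLinearEquiv.symm_apply_apply]
      exact hu
    set J : ↥(Xs n) →L[ℝ] ↥X :=
      ContinuousLinearMap.codRestrict ((C : Y →L[ℝ] Y).comp (Xs n).subtypeL) X memJ with hJdef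
    set J' : ↥X →L[ℝ] ↥(Xs n) :=
      ContinuousLinearMap.codRestrict ((C.symm : Y →L[ℝ] Y).comp X.subtypeL) (Xs n) memJ'
      with hJ'def
    have hJapp : ∀ u : ↥(Xs n), ((J u : Y)) = C (u : Y) := fun _ => rfl
    have hJ'app : ∀ w : ↥X, ((J' w : Y)) = C.symm (w : Y) := fun _ => rfl
    have hJ'J : ∀ u : ↥(Xs n), J' (J u) = u := by
      intro u
      apply Subtype.ext
      rw [hJ'app, hJapp, ContinuousLinearEquiv.symm_apply_apply]
    have hJJ' : ∀ w : ↥X, J (J' w) = w := by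
      intro w
      apply Subtype.ext
      rw [hJapp, hJ'app, ContinuousLinearEquiv.apply_symm_apply]
    set i := (1 - η)⁻¹ with hidef
    have h1η : 0 < 1 - η := by linarith
    have hi0 : 0 < i := inv_pos.mpr h1η
    have hi : (1 - η) * i = 1 := mul_inv_cancel₀ h1η.ne'
    have hi32 : i ≤ 3/2 := by nlinarith
    have hJle : ‖J‖ ≤ 1 + η := by
      apply ContinuousLinearMap.opNorm_le_bound _ (by linarith)
      intro u
      have h2 : ‖J u‖ = ‖C (u : Y)‖ := rfl
      have h3 : ‖u‖ = ‖(u : Y)‖ := rfl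
      rw [h2, h3]
      have h4 : C (u : Y) = (u : Y) + (C (u : Y) - (u : Y)) := by abel
      calc ‖C (u : Y)‖ = ‖(u : Y) + (C (u : Y) - (u : Y))‖ := by rw [← h4]
        _ ≤ ‖(u : Y)‖ + ‖C (u : Y) - (u : Y)‖ := norm_add_le _ _
        _ ≤ ‖(u : Y)‖ + η * ‖(u : Y)‖ := by linarith [hCpt (u : Y)]
        _ = (1 + η) * ‖(u : Y)‖ := by ring
    have hJ'le : ‖J'‖ ≤ i := by
      apply ContinuousLinearMap.opNorm_le_bound _ hi0.le
      intro w
      have h2 : ‖J' w‖ = ‖C.symm (w : Y)‖ := rfl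
      have h3 : ‖w‖ = ‖(w : Y)‖ := rfl
      rw [h2, h3]
      set u := C.symm (w : Y) with hu
      have h4 : C u = (w : Y) := ContinuousLinearEquiv.apply_symm_apply C _
      have h5 : ‖u‖ - η * ‖u‖ ≤ ‖(w : Y)‖ := by
        have h6 := hCpt u
        have h7 : ‖u‖ ≤ ‖C u‖ + ‖C u - u‖ := by
          have : u = C u - (C u - u) := by abel
          calc ‖u‖ = ‖C u - (C u - u)‖ := by rw [← this]
            _ ≤ ‖C u‖ + ‖C u - u‖ := norm_sub_le _ _
        rw [h4] at h7 h6 <;> linarith [h6, h7]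
      exact inv_bound hi hi0 (by linarith) (norm_nonneg u)
    by_cases hbot : ∃ x₀ ∈ X, x₀ ≠ (0 : Y)
    · -- main case
      obtain ⟨x₀, hx₀X, hx₀⟩ := hbot
      set e : ↥X := ⟨‖x₀‖⁻¹ • x₀, X.smul_mem _ hx₀X⟩ with he
      have hx₀n : ‖x₀‖ ≠ 0 := norm_ne_zero_iff.mpr hx₀
      have he1 : ‖e‖ = 1 := by
        have : ‖e‖ = ‖‖x₀‖⁻¹ • x₀‖ := rfl
        rw [this, norm_smul, norm_inv, norm_norm, inv_mul_cancel₀ hx₀n]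
      haveI : Nontrivial ↥X := by
        refine ⟨e, 0, fun h => ?_⟩
        rw [h, norm_zero] at he1
        norm_num at he1
      have hid : ‖ContinuousLinearMap.id ℝ ↥X‖ = 1 := ContinuousLinearMap.norm_id
      have hbdd : BddBelow {r : ℝ | ∃ T : ↥X →L[ℝ] ↥X, ‖T‖ = 1 ∧ r = nradius T} :=
        ⟨0, by rintro r ⟨T, hT, rfl⟩; exact nradius_nonneg T⟩
      have hNle1 : nindex ↥X ≤ 1 := by
        have h1 : nindex ↥X ≤ nradius (ContinuousLinearMap.id ℝ ↥X) :=
          csInf_le hbdd ⟨_, hid, rfl⟩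
        have h2 : nradius (ContinuousLinearMap.id ℝ ↥X) ≤ 1 := by
          apply Real.sSup_le _ zero_le_one
          rintro r ⟨x, f, hx, hf, hfx, rfl⟩
          simp [ContinuousLinearMap.id_apply, hfx]
        linarith
      have hN0 : 0 ≤ nindex ↥X := nindex_nonneg _
      set δ := min (ε/4) 1 with hδdef
      have hδ0 : 0 < δ := lt_min (by positivity) one_pos
      have hδε : δ ≤ ε/4 := min_le_left _ _
      have hδ1 : δ ≤ 1 := min_le_right _ _
      have hinf : sInf {r : ℝ | ∃ T : ↥X →L[ℝ] ↥X, ‖T‖ = 1 ∧ r = nradius T}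
          < nindex ↥X + δ := by
        have : nindex ↥X = sInf {r : ℝ | ∃ T : ↥X →L[ℝ] ↥X, ‖T‖ = 1 ∧ r = nradius T} := rfl
        linarith
      have hne2 : Set.Nonempty {r : ℝ | ∃ T : ↥X →L[ℝ] ↥X, ‖T‖ = 1 ∧ r = nradius T} :=
        ⟨_, _, hid, rfl⟩
      obtain ⟨r, hrmem2, hrlt2⟩ := exists_lt_of_csInf_lt hne2 hinf
      obtain ⟨T, hTnorm, rfl⟩ := hrmem2
      set v := nradius T with hvdef
      have hv0 : 0 ≤ v := nradius_nonneg T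
      have hvN : v < nindex ↥X + δ := hrlt2
      have hvle2 : v ≤ 2 := by linarith
      have hvε : v ≤ nindex ↥X + ε/4 := by linarith
      set S : ↥(Xs n) →L[ℝ] ↥(Xs n) := J'.comp (T.comp J) with hSdef
      have hSapp : ∀ u, S u = J' (T (J u)) := fun _ => rfl
      set c := (1 + η) * i with hcdef
      obtain ⟨hc1, hc2, hcm1⟩ := cfact hη0 hη3 hi0 hi
      have hSle : ‖S‖ ≤ c := by
        calc ‖S‖ ≤ ‖J'‖ * ‖T.comp J‖ := ContinuousLinearMap.opNorm_comp_le _ _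
          _ ≤ i * (1 * (1 + η)) := by
              refine mul_le_mul hJ'le ?_ (ContinuousLinearMap.opNorm_nonneg _) hi0.le
              calc ‖T.comp J‖ ≤ ‖T‖ * ‖J‖ := ContinuousLinearMap.opNorm_comp_le _ _
                _ ≤ 1 * (1 + η) := by rw [hTnorm]; exact mul_le_mul_of_nonneg_left hJle one_pos.le
          _ = c := by rw [hcdef]; ring
      have hTid : T = J.comp (S.comp J') := by
        apply ContinuousLinearMap.ext
        intro w
        rw [ContinuousLinearMap.comp_apply, ContinuousLinearMap.comp_apply, hSapp, hJJ', hJJ']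
      have hSge : 1 ≤ c * ‖S‖ := by
        have h1 : ‖T‖ ≤ ‖J‖ * ‖S.comp J'‖ := by
          rw [hTid]; exact ContinuousLinearMap.opNorm_comp_le _ _
        have h2 : ‖S.comp J'‖ ≤ ‖S‖ * ‖J'‖ := ContinuousLinearMap.opNorm_comp_le _ _
        have h3 : ‖S‖ * ‖J'‖ ≤ ‖S‖ * i := mul_le_mul_of_nonneg_left hJ'le (ContinuousLinearMap.opNorm_nonneg _)
        have h4 : ‖J‖ * ‖S.comp J'‖ ≤ (1 + η) * (‖S‖ * i) := by
          apply mul_le_mul hJle (le_trans h2 h3) (ContinuousLinearMap.opNorm_nonneg _) (by linarith)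
        rw [hTnorm] at h1
        calc (1:ℝ) ≤ (1 + η) * (‖S‖ * i) := le_trans h1 h4
          _ = c * ‖S‖ := by rw [hcdef]; ring
      have hS0 : 0 < ‖S‖ := pos_of_one_le_mul hSge hc2 (norm_nonneg S)
      set w := ‖S‖⁻¹ with hwdef
      have hw0 : 0 < w := inv_pos.mpr hS0
      have hsw : ‖S‖ * w = 1 := mul_inv_cancel₀ hS0.ne'
      have hwc : w ≤ c := w_le_c hSge hsw hw0.le
      set S₀ := w • S with hS₀def
      have hS₀ : ‖S₀‖ = 1 := by
        have hle : ‖S₀‖ ≤ 1 := by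
          have h1 := ContinuousLinearMap.opNorm_smul_le w S
          rw [Real.norm_eq_abs, abs_of_pos hw0] at h1
          calc ‖S₀‖ = ‖w • S‖ := by rw [hS₀def]
            _ ≤ w * ‖S‖ := h1
            _ = 1 := by rw [mul_comm]; exact hsw
        have hge : 1 ≤ ‖S₀‖ := by
          have hSeq : S = ‖S‖ • S₀ := by
            rw [hS₀def, smul_smul, hsw, one_smul]
          have h2 := ContinuousLinearMap.opNorm_smul_le (‖S‖) S₀
          rw [Real.norm_eq_abs, abs_of_pos hS0] at h2
          rw [← hSeq] at h2
          exact one_le_of_le_mul hS0 h2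
        linarith
      set t := ε/100 with htdef
      have ht0 : 0 < t := by rw [htdef]; positivity
      set s := t * w with hsdef
      have hs0 : 0 < s := mul_pos ht0 hw0
      have hB1 : ‖ContinuousLinearMap.id ℝ ↥X + s • T‖ ≤ 1 + s * v + 2 * s^2 :=
        norm_id_add_smul_le hTnorm.le hs0
      have hB2 : ‖ContinuousLinearMap.id ℝ ↥X - s • T‖ ≤ 1 + s * v + 2 * s^2 := by
        have h1 := norm_id_add_smul_le (T := -T) (by rw [norm_neg]; exact hTnorm.le) hs0
        rw [nradius_neg, smul_neg, ← sub_eq_add_neg] at h1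
        exact h1
      have hpos : (0:ℝ) ≤ 1 + s * v + 2 * s^2 := one_add_nonneg hs0.le hv0
      have hkey1 : ContinuousLinearMap.id ℝ ↥(Xs n) + t • S₀ =
          J'.comp ((ContinuousLinearMap.id ℝ ↥X + s • T).comp J) := by
        ext u
        simp only [ContinuousLinearMap.add_apply, ContinuousLinearMap.coe_comp',
          Function.comp_apply, ContinuousLinearMap.id_apply, ContinuousLinearMap.smul_apply,
          map_add, map_smul, hJ'J]
        rw [hS₀def, ContinuousLinearMap.smul_apply, smul_smul, ← hsdef, hSapp]
      have hkey2 : ContinuousLinearMap.id ℝ ↥(Xs n) - t • S₀ =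
          J'.comp ((ContinuousLinearMap.id ℝ ↥X - s • T).comp J) := by
        ext u
        simp only [ContinuousLinearMap.sub_apply, ContinuousLinearMap.coe_comp',
          Function.comp_apply, ContinuousLinearMap.id_apply, ContinuousLinearMap.smul_apply,
          map_sub, map_smul, hJ'J]
        rw [hS₀def, ContinuousLinearMap.smul_apply, smul_smul, ← hsdef, hSapp]
      have hcomp : ∀ R : ↥X →L[ℝ] ↥X, ‖R‖ ≤ 1 + s * v + 2 * s^2 →
          ‖J'.comp (R.comp J)‖ ≤ c * (1 + s * v + 2 * s^2) := by
        intro R hR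
        calc ‖J'.comp (R.comp J)‖ ≤ ‖J'‖ * ‖R.comp J‖ := ContinuousLinearMap.opNorm_comp_le _ _
          _ ≤ i * ((1 + s * v + 2 * s^2) * (1 + η)) := by
              refine mul_le_mul hJ'le ?_ (ContinuousLinearMap.opNorm_nonneg _) hi0.le
              calc ‖R.comp J‖ ≤ ‖R‖ * ‖J‖ := ContinuousLinearMap.opNorm_comp_le _ _
                _ ≤ (1 + s * v + 2 * s^2) * (1 + η) :=
                    mul_le_mul hR hJle (ContinuousLinearMap.opNorm_nonneg _) hpos
          _ = c * (1 + s * v + 2 * s^2) := by rw [hcdef]; ring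
      have hn1 : ‖ContinuousLinearMap.id ℝ ↥(Xs n) + t • S₀‖ ≤ c * (1 + s * v + 2 * s^2) := by
        rw [hkey1]; exact hcomp _ hB1
      have hn2 : ‖ContinuousLinearMap.id ℝ ↥(Xs n) - t • S₀‖ ≤ c * (1 + s * v + 2 * s^2) := by
        rw [hkey2]; exact hcomp _ hB2
      set B := (c * (1 + s * v + 2 * s^2) - 1) / t with hBdef
      have hB0 : 0 ≤ B := div_nonneg (numer_nonneg hc1 hs0.le hv0) ht0.le
      have hrad : nradius S₀ ≤ B := by
        apply Real.sSup_le _ hB0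
        rintro r ⟨x, f, hx, hf, hfx, rfl⟩
        rw [abs_le]
        have happ1 : (ContinuousLinearMap.id ℝ ↥(Xs n) + t • S₀) x = x + t • S₀ x := by
          simp [ContinuousLinearMap.add_apply]
        have happ2 : (ContinuousLinearMap.id ℝ ↥(Xs n) - t • S₀) x = x - t • S₀ x := by
          simp [ContinuousLinearMap.sub_apply]
        have hb1 : f (x + t • S₀ x) ≤ c * (1 + s * v + 2 * s^2) := by
          calc f (x + t • S₀ x) ≤ |f (x + t • S₀ x)| := le_abs_self _
            _ ≤ ‖f‖ * ‖x + t • S₀ x‖ := by rw [← Real.norm_eq_abs]; exact f.le_opNorm _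
            _ ≤ 1 * (‖ContinuousLinearMap.id ℝ ↥(Xs n) + t • S₀‖ * ‖x‖) := by
                rw [hf, ← happ1]
                exact mul_le_mul_of_nonneg_left (ContinuousLinearMap.le_opNorm _ _) one_pos.le
            _ ≤ c * (1 + s * v + 2 * s^2) := by rw [hx]; simpa using hn1
        have hb2 : f (x - t • S₀ x) ≤ c * (1 + s * v + 2 * s^2) := by
          calc f (x - t • S₀ x) ≤ |f (x - t • S₀ x)| := le_abs_self _
            _ ≤ ‖f‖ * ‖x - t • S₀ x‖ := by rw [← Real.norm_eq_abs]; exact f.le_opNorm _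
            _ ≤ 1 * (‖ContinuousLinearMap.id ℝ ↥(Xs n) - t • S₀‖ * ‖x‖) := by
                rw [hf, ← happ2]
                exact mul_le_mul_of_nonneg_left (ContinuousLinearMap.le_opNorm _ _) one_pos.le
            _ ≤ c * (1 + s * v + 2 * s^2) := by rw [hx]; simpa using hn2
        have hfadd : f (x + t • S₀ x) = 1 + t * f (S₀ x) := by
          rw [map_add, map_smul, smul_eq_mul, hfx]
        have hfsub : f (x - t • S₀ x) = 1 - t * f (S₀ x) := by
          rw [map_sub, map_smul, smul_eq_mul, hfx]
        rw [hfadd] at hb1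
        rw [hfsub] at hb2
        constructor
        · rw [hBdef, ← neg_div, div_le_iff₀ ht0]
          linarith
        · rw [hBdef, le_div_iff₀ ht0]
          linarith
      have hle1 : nindex ↥(Xs n) ≤ nradius S₀ := by
        apply csInf_le ⟨0, by rintro r ⟨T', hT', rfl⟩; exact nradius_nonneg T'⟩
        exact ⟨S₀, hS₀, rfl⟩
      -- final arithmetic
      have hfinal : B ≤ nindex ↥X + ε := by
        rw [hBdef, div_le_iff₀ ht0]
        exact final_arith hε hη0 hη96 hη1600 hc1 hc2 hcm1 hw0 hwc hv0 hvle2 hvε htdef hsdef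
      linarith
    · -- degenerate case : X = 0
      push_neg at hbot
      have hall : ∀ u : ↥(Xs n), u = 0 := by
        intro u
        apply Subtype.ext
        have h1 : C (u : Y) ∈ X := memJ u
        have h2 : C (u : Y) = 0 := hbot _ h1
        have h3 := congrArg C.symm h2
        rw [ContinuousLinearEquiv.symm_apply_apply, map_zero] at h3
        exact h3
      have hempty : {r : ℝ | ∃ T : ↥(Xs n) →L[ℝ] ↥(Xs n), ‖T‖ = 1 ∧ r = nradius T} = ∅ := by
        apply Set.eq_empty_iff_forall_notMem.mpr
        rintro r ⟨T, hT, _⟩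
        have hTz : T = 0 := by
          ext u
          rw [hall u, map_zero]
          rfl
        rw [hTz, ContinuousLinearMap.opNorm_zero] at hT
        norm_num at hT
      have : nindex ↥(Xs n) = 0 := by
        unfold nindex
        rw [hempty, Real.sInf_empty]
      rw [this]
      linarith [nindex_nonneg ↥X]
  -- conclude limsup bound
  have hb : IsCoboundedUnder (· ≤ ·) atTop (fun n => nindex ↥(Xs n)) :=
    isCoboundedUnder_le_of_le atTop (x := 0) (fun n => nindex_nonneg _)
  apply _root_.le_of_forall_pos_le_add
  intro ε hε
  exact Filter.limsup_le_of_le hb (key ε hε)
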